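/- Let c be the maximum letter of a totally ordered alphabet A and x a nonempty finite word over A. Then x is singular if and only if the word obtained from ρ_c(x) by deleting its final letter c is singular, where ρ_c is the morphism fixing c and sending every other letter d' to d' c. -/

import Mathlib

/-- Lexicographic order on finite words with the convention that
`u < v` whenever `v` is a proper prefix of `u`. -/
def Wlt {A : Type*} [LinearOrder A] : List A → List A → Prop
  | [], _ => False
  | _ :: _, [] => True
  | a :: u, b :: v => a < b ∨ (a = b ∧ Wlt u v)

/-- A finite word is singular if every factorization `x = reverse u ++ v ++ w`
with `v` nonempty, `v ≠ reverse v`, `u ≠ w` satisfies `v < v̄ ↔ w < u`. -/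
def Singular {A : Type*} [LinearOrder A] (x : List A) : Prop :=
  ∀ u v w : List A, x = u.reverse ++ v ++ w → v ≠ [] → v ≠ v.reverse → u ≠ w →
    (Wlt v v.reverse ↔ Wlt w u)

/-- The morphism `λ_d` sending `d ↦ d` and `d' ↦ d d'` for `d' ≠ d`. -/
def lamM {A : Type*} [DecidableEq A] (d : A) (x : List A) : List A :=
  (x.map (fun e => if e = d then [d] else [d, e])).flatten

/-- The morphism `ρ_d` sending `d ↦ d` and `d' ↦ d' d` for `d' ≠ d`. -/
def rhoM {A : Type*} [DecidableEq A] (d : A) (x : List A) : List A :=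
  (x.map (fun e => if e = d then [d] else [e, d])).flatten

section Infra
variable {A : Type*} [LinearOrder A] {c : A}

lemma rho_nil : rhoM c [] = [] := rfl

lemma rho_cons (a : A) (s : List A) :
    rhoM c (a :: s) = (if a = c then [c] else [a, c]) ++ rhoM c s := by
  simp [rhoM]

lemma rho_append (s t : List A) : rhoM c (s ++ t) = rhoM c s ++ rhoM c t := by
  induction s with
  | nil => rfl
  | cons a s ih => simp [rho_cons, ih]

lemma rho_ne_nil {s : List A} (h : s ≠ []) : rhoM c s ≠ [] := by
  cases s with
  | nil => exact absurd rfl h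
  | cons a t => rw [rho_cons]; split <;> simp

lemma rho_eq_nil {s : List A} (h : rhoM c s = []) : s = [] := by
  by_contra hs; exact rho_ne_nil hs h

lemma wlt_nil (l : List A) : ¬ Wlt [] l := fun h => h

lemma wlt_ne_nil {l : List A} (h : l ≠ []) : Wlt l [] := by
  cases l with
  | nil => exact absurd rfl h
  | cons a t => trivial

lemma wlt_cons_iff {a b : A} {u v : List A} :
    Wlt (a :: u) (b :: v) ↔ a < b ∨ (a = b ∧ Wlt u v) := Iff.rfl

lemma wlt_cons_cons {a : A} {u v : List A} : Wlt (a :: u) (a :: v) ↔ Wlt u v := by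
  simp [wlt_cons_iff, lt_irrefl]

lemma wlt_irrefl (l : List A) : ¬ Wlt l l := by
  induction l with
  | nil => exact wlt_nil []
  | cons a t ih => rw [wlt_cons_cons]; exact ih

lemma wlt_connex : ∀ {a b : List A}, a ≠ b → Wlt a b ∨ Wlt b a := by
  intro a
  induction a with
  | nil => intro b h; cases b with
    | nil => exact absurd rfl h
    | cons f b' => exact Or.inr trivial
  | cons e a' ih => intro b h; cases b with
    | nil => exact Or.inl trivial
    | cons f b' =>
      rcases lt_trichotomy e f with hlt | heq | hgt
      · exact Or.inl (Or.inl hlt)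
      · subst heq
        have : a' ≠ b' := fun hh => h (by rw [hh])
        rcases ih this with h1 | h1
        · exact Or.inl (Or.inr ⟨rfl, h1⟩)
        · exact Or.inr (Or.inr ⟨rfl, h1⟩)
      · exact Or.inr (Or.inl hgt)

lemma wlt_append_left (z : List A) {a b : List A} : Wlt (z ++ a) (z ++ b) ↔ Wlt a b := by
  induction z with
  | nil => rfl
  | cons e z ih => simpa [wlt_cons_cons] using ih

lemma wlt_concat (hc : ∀ e : A, e ≤ c) : ∀ {a b : List A}, Wlt (a ++ [c]) (b ++ [c]) ↔ Wlt a b := by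
  intro a
  induction a with
  | nil =>
    intro b; cases b with
    | nil => simp [wlt_cons_iff, lt_irrefl, wlt_nil]
    | cons f b' =>
      simp only [List.nil_append, List.cons_append, wlt_cons_iff]
      constructor
      · rintro (h | ⟨rfl, h⟩)
        · exact absurd h (not_lt.2 (hc f))
        · exact absurd h (wlt_nil _)
      · intro h; exact absurd h (wlt_nil _)
  | cons e a' ih =>
    intro b; cases b with
    | nil =>
      simp only [List.cons_append, List.nil_append]
      constructor
      · intro _; trivial
      · intro _
        rcases (hc e).lt_or_eq with h | h
        · exact Or.inl h
        · exact Or.inr ⟨h, wlt_ne_nil (by simp)⟩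
    | cons f b' => simp [wlt_cons_iff, ih]

lemma wlt_rho : ∀ {s t : List A}, Wlt (rhoM c s) (rhoM c t) ↔ Wlt s t := by
  intro s
  induction s with
  | nil => intro t; rw [rho_nil]; exact ⟨fun h => absurd h (wlt_nil _), fun h => absurd h (wlt_nil _)⟩
  | cons a s' ih =>
    intro t; cases t with
    | nil =>
      rw [rho_nil]
      exact ⟨fun _ => trivial, fun _ => wlt_ne_nil (rho_ne_nil (by simp))⟩
    | cons b t' =>
      rw [rho_cons, rho_cons]
      by_cases hac : a = c <;> by_cases hbc : b = c
      · simp [hac, hbc, wlt_cons_iff, lt_irrefl, ih]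
      · have hcb : ¬ c = b := fun h => hbc h.symm
        simp [hac, hbc, hcb, wlt_cons_iff]
      · simp [hac, hbc, wlt_cons_iff]
      · simp [wlt_cons_iff, hac, hbc, lt_irrefl, ih]

lemma dropLast_rho_concat : ∀ {s : List A}, s ≠ [] → (rhoM c s).dropLast ++ [c] = rhoM c s := by
  intro s
  induction s with
  | nil => intro h; exact absurd rfl h
  | cons a t ih =>
    intro _
    cases t with
    | nil => rw [rho_cons]; split <;> simp [rho_nil]
    | cons b t' =>
      rw [rho_cons, List.dropLast_append_of_ne_nil (rho_ne_nil (by simp)),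
        List.append_assoc, ih (by simp)]

lemma rev_rho : ∀ {s : List A}, s ≠ [] →
    (rhoM c s).reverse = c :: (rhoM c s.reverse).dropLast := by
  intro s
  induction s with
  | nil => intro h; exact absurd rfl h
  | cons a t ih =>
    intro _
    have hρa : rhoM c [a] = if a = c then [c] else [a, c] := by
      rw [rho_cons, rho_nil, List.append_nil]
    have hBne : (if a = c then [c] else [a, c]) ≠ [] := by split <;> simp
    have hBrev : (if a = c then [c] else [a, c]).reverse
        = c :: (if a = c then [c] else [a, c]).dropLast := by
      split <;> simp
    cases t with
    | nil =>
      rw [List.reverse_singleton, hρa]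
      split <;> simp [rho_cons, rho_nil]
    | cons b t' =>
      have htne : (b :: t') ≠ [] := by simp
      have hrevne : (b :: t').reverse ≠ [] := by simp
      have key : rhoM c ((a :: b :: t').reverse)
          = rhoM c ((b :: t').reverse) ++ rhoM c [a] := by
        rw [show (a :: b :: t').reverse = (b :: t').reverse ++ [a] from by simp, rho_append]
      calc (rhoM c (a :: b :: t')).reverse
          = (rhoM c (b :: t')).reverse ++ (if a = c then [c] else [a, c]).reverse := by
            rw [rho_cons, List.reverse_append]
        _ = (c :: (rhoM c (b :: t').reverse).dropLast)
              ++ (if a = c then [c] else [a, c]).reverse := by rw [ih htne]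
        _ = c :: ((rhoM c (b :: t').reverse).dropLast ++ [c]
              ++ (if a = c then [c] else [a, c]).dropLast) := by
            rw [hBrev]; simp [List.append_assoc]
        _ = c :: (rhoM c ((b :: t').reverse)
              ++ (if a = c then [c] else [a, c]).dropLast) := by
            rw [dropLast_rho_concat (c := c) hrevne]
        _ = c :: (rhoM c ((a :: b :: t').reverse)).dropLast := by
            rw [key, hρa, List.dropLast_append_of_ne_nil hBne]

lemma rev_dropLast_rho (s : List A) :
    ((rhoM c s).dropLast).reverse = (rhoM c s.reverse).dropLast := by
  cases s with
  | nil => rfl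
  | cons a t =>
    have hs : (a :: t) ≠ [] := by simp
    have h2 : (rhoM c (a :: t)).reverse = c :: ((rhoM c (a :: t)).dropLast).reverse := by
      conv_lhs => rw [← dropLast_rho_concat (c := c) hs]
      simp
    have h3 := rev_rho (c := c) hs
    have h4 := h2.symm.trans h3
    injection h4

lemma rho_inj {s t : List A} (h : rhoM c s = rhoM c t) : s = t := by
  by_contra hne
  rcases wlt_connex hne with hw | hw
  · exact wlt_irrefl _ (h ▸ (wlt_rho.2 hw))
  · exact wlt_irrefl _ (h ▸ (wlt_rho.2 hw))

lemma dl_concat_c (s : List A) : (rhoM c (s ++ [c])).dropLast = rhoM c s := by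
  rw [rho_append, rho_cons, rho_nil, List.append_nil, if_pos rfl, List.dropLast_concat]

lemma dl_concat_e {e : A} (he : e ≠ c) (s : List A) :
    (rhoM c (s ++ [e])).dropLast = rhoM c s ++ [e] := by
  rw [rho_append, rho_cons, rho_nil, List.append_nil, if_neg he,
    show ([e, c] : List A) = [e] ++ [c] from rfl, ← List.append_assoc, List.dropLast_concat]

lemma dl_cons_c {w : List A} (hw : w ≠ []) :
    (rhoM c (c :: w)).dropLast = c :: (rhoM c w).dropLast := by
  rw [rho_cons, if_pos rfl, List.singleton_append,
    show (c :: rhoM c w) = [c] ++ rhoM c w from rfl,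
    List.dropLast_append_of_ne_nil (rho_ne_nil hw), List.singleton_append]

lemma dl_c : (rhoM c [c]).dropLast = [] := by
  rw [rho_cons, rho_nil, if_pos rfl]; rfl

lemma rev_rho_rev (u : List A) :
    (rhoM c u.reverse).reverse = (rhoM c (c :: u)).dropLast := by
  cases u with
  | nil => rw [List.reverse_nil, rho_nil]; exact dl_c.symm
  | cons a t =>
    rw [rev_rho (by simp), List.reverse_reverse, dl_cons_c (by simp)]

lemma rev_rho_concat_e {e : A} (he : e ≠ c) (p : List A) :
    (rhoM c p ++ [e]).reverse = (rhoM c (e :: p.reverse)).dropLast := by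
  rw [rho_cons, if_neg he]
  cases p with
  | nil => rw [rho_nil]; rfl
  | cons a t =>
    rw [List.reverse_append, rev_rho (by simp),
      List.dropLast_append_of_ne_nil (rho_ne_nil (by simp))]
    rfl

lemma dl_inj {s t : List A} (hs : s ≠ []) (ht : t ≠ [])
    (h : (rhoM c s).dropLast = (rhoM c t).dropLast) : s = t := by
  apply rho_inj (c := c)
  rw [← dropLast_rho_concat hs, ← dropLast_rho_concat ht, h]

lemma dl_ne_nil {v : List A} (hv : v ≠ []) (hvc : v ≠ [c]) :
    (rhoM c v).dropLast ≠ [] := by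
  cases v with
  | nil => exact absurd rfl hv
  | cons a t =>
    cases t with
    | nil =>
      have hac : a ≠ c := fun h => hvc (by rw [h])
      rw [rho_cons, if_neg hac, rho_nil, List.append_nil]
      simp
    | cons b t' =>
      rw [rho_cons, List.dropLast_append_of_ne_nil (rho_ne_nil (by simp))]
      split <;> simp

lemma wlt_dl (hc : ∀ e : A, e ≤ c) {s t : List A} (hs : s ≠ []) (ht : t ≠ []) :
    Wlt (rhoM c s).dropLast (rhoM c t).dropLast ↔ Wlt s t := by
  rw [← wlt_concat hc, dropLast_rho_concat hs, dropLast_rho_concat ht, wlt_rho]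

lemma split_rho : ∀ (x a b : List A), a ++ b = rhoM c x →
    (∃ p q, x = p ++ q ∧ a = rhoM c p ∧ b = rhoM c q) ∨
    (∃ p e q, e ≠ c ∧ x = p ++ e :: q ∧ a = rhoM c p ++ [e] ∧ b = c :: rhoM c q) := by
  intro x
  induction x with
  | nil =>
    intro a b h
    rw [rho_nil] at h
    rcases List.append_eq_nil_iff.1 h with ⟨rfl, rfl⟩
    exact Or.inl ⟨[], [], rfl, rfl, rfl⟩
  | cons d x' ih =>
    intro a b h
    rw [rho_cons] at h
    cases a with
    | nil =>
      exact Or.inl ⟨[], d :: x', rfl, rfl, by rw [rho_cons, ← h]; rfl⟩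
    | cons f a' =>
      by_cases hd : d = c
      · rw [if_pos hd, List.singleton_append, List.cons_append] at h
        have hf : f = c := (List.cons.injEq _ _ _ _ ▸ h).1
        have h' : a' ++ b = rhoM c x' := (List.cons.injEq _ _ _ _ ▸ h).2
        rcases ih a' b h' with ⟨p, q, hx, ha, hb⟩ | ⟨p, e, q, he, hx, ha, hb⟩
        · refine Or.inl ⟨d :: p, q, by rw [hx]; rfl, ?_, hb⟩
          rw [rho_cons, if_pos hd, ha, hf]; rfl
        · refine Or.inr ⟨d :: p, e, q, he, by rw [hx]; rfl, ?_, hb⟩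
          rw [rho_cons, if_pos hd, ha, hf]; rfl
      · rw [if_neg hd] at h
        cases a' with
        | nil =>
          have hf : f = d := by
            have := (List.cons.injEq _ _ _ _ ▸ h).1; exact this
          have hb : b = c :: rhoM c x' := by
            have := (List.cons.injEq _ _ _ _ ▸ h).2; simpa using this
          exact Or.inr ⟨[], d, x', hd, rfl, by rw [rho_nil, hf]; rfl, hb⟩
        | cons g a'' =>
          have hf : f = d := (List.cons.injEq _ _ _ _ ▸ h).1
          have h2 := (List.cons.injEq _ _ _ _ ▸ h).2
          have hg : g = c := (List.cons.injEq _ _ _ _ ▸ h2).1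
          have h' : a'' ++ b = rhoM c x' := (List.cons.injEq _ _ _ _ ▸ h2).2
          rcases ih a'' b h' with ⟨p, q, hx, ha, hb⟩ | ⟨p, e, q, he, hx, ha, hb⟩
          · refine Or.inl ⟨d :: p, q, by rw [hx]; rfl, ?_, hb⟩
            rw [rho_cons, if_neg hd, ha, hf, hg, List.cons_append, List.cons_append,
              List.nil_append]
          · refine Or.inr ⟨d :: p, e, q, he, by rw [hx]; rfl, ?_, hb⟩
            rw [rho_cons, if_neg hd, ha, hf, hg]
            simp
lemma dl_append {s t : List A} (ht : t ≠ []) :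
    (rhoM c (s ++ t)).dropLast = rhoM c s ++ (rhoM c t).dropLast := by
  rw [rho_append, List.dropLast_append_of_ne_nil (rho_ne_nil ht)]

lemma dl_mid {v w : List A} (hv : v ≠ []) :
    (rhoM c (v ++ w)).dropLast = (rhoM c v).dropLast ++ (rhoM c (c :: w)).dropLast := by
  cases w with
  | nil => rw [List.append_nil, dl_c, List.append_nil]
  | cons b w' =>
    rw [dl_append (by simp), dl_cons_c (by simp)]
    conv_lhs => rw [← dropLast_rho_concat hv]
    simp [List.append_assoc]

lemma dl_cons_e {e : A} (he : e ≠ c) (u : List A) :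
    ∃ l, (rhoM c (e :: u)).dropLast = e :: l := by
  rw [rho_cons, if_neg he]
  cases u with
  | nil => exact ⟨[], by rw [rho_nil]; rfl⟩
  | cons a t =>
    refine ⟨c :: (rhoM c (a :: t)).dropLast, ?_⟩
    rw [List.dropLast_append_of_ne_nil (rho_ne_nil (by simp))]
    rfl

lemma shapeI_core (hc : ∀ e : A, e ≤ c) {x p v₀ x₃ : List A}
    (hs : Singular x) (hxd : x = p ++ v₀ ++ x₃) (hx₃ : x₃ ≠ [])
    (h1 : v₀ ++ [c] ≠ c :: v₀.reverse) (h2 : c :: p.reverse ≠ x₃) :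
    Wlt (v₀ ++ [c]) (c :: v₀.reverse) ↔ Wlt x₃ (c :: p.reverse) := by
  cases x₃ with
  | nil => exact absurd rfl hx₃
  | cons hd w₂ =>
    by_cases hdc : hd = c
    · subst hd
      have decomp : x = p.reverse.reverse ++ (v₀ ++ [c]) ++ w₂ := by
        rw [hxd]; simp [List.append_assoc]
      have key := hs p.reverse (v₀ ++ [c]) w₂ decomp (by simp)
        (by simpa using h1) (fun h => h2 (by rw [h]))
      rw [show (v₀ ++ [c]).reverse = c :: v₀.reverse from by simp] at key
      exact key.trans (wlt_cons_cons (a := c)).symm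
    · have hdlt : hd < c := lt_of_le_of_ne (hc hd) hdc
      apply iff_of_true
      · cases v₀ with
        | nil => exact (h1 (by simp)).elim
        | cons a t =>
          by_cases hac : a = c
          · subst a
            have htne : t ≠ t.reverse := by
              intro h
              apply h1
              rw [List.cons_append, List.reverse_cons, ← h]
            have htnil : t ≠ [] := fun h => htne (by rw [h]; rfl)
            have decomp : x = (c :: p.reverse).reverse ++ t ++ (hd :: w₂) := by
              rw [hxd]; simp [List.append_assoc]
            have key := hs (c :: p.reverse) t (hd :: w₂) decomp htnil htne
              (fun h => hdc ((List.cons_eq_cons.mp h).1.symm))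
            have hwlt_t : Wlt t t.reverse := key.2 (Or.inl hdlt)
            rw [List.cons_append, List.reverse_cons]
            exact wlt_cons_cons.2 ((wlt_concat hc).2 hwlt_t)
          · rw [List.cons_append]
            exact Or.inl (lt_of_le_of_ne (hc a) hac)
      · exact Or.inl hdlt

end Infra

theorem singular_iff_rhoM_max {A : Type*} [LinearOrder A] (c : A) (hc : ∀ e : A, e ≤ c)
    (x : List A) (hx : x ≠ []) : Singular x ↔ Singular (rhoM c x).dropLast := by
  constructor
  · -- direction A
    intro hs u' v' w' hy hvne hvpal huw
    have hx' : u'.reverse ++ (v' ++ (w' ++ [c])) = rhoM c x := by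
      rw [← dropLast_rho_concat (c := c) hx, hy]
      simp [List.append_assoc]
    rcases split_rho x u'.reverse (v' ++ (w' ++ [c])) hx' with
      ⟨p, q, hxpq, hup, hrest⟩ | ⟨p, e₀, q, he₀, hxpq, hup, hrest⟩
    · -- left cut aligned
      have hu'' : u' = (rhoM c (c :: p.reverse)).dropLast := by
        rw [← rev_rho_rev, List.reverse_reverse, ← hup, List.reverse_reverse]
      rcases split_rho q v' (w' ++ [c]) hrest with
        ⟨v₀, x₃, hq, hv0, hw0⟩ | ⟨v₀, e, x₃, he, hq, hv0, hw0⟩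
      · -- Shape I
        have hx₃ne : x₃ ≠ [] := by
          intro h; rw [h, rho_nil] at hw0; simp at hw0
        have hw' : w' = (rhoM c x₃).dropLast := by rw [← hw0, List.dropLast_concat]
        have hv' : v' = (rhoM c (v₀ ++ [c])).dropLast := by rw [dl_concat_c, hv0]
        have hrv' : v'.reverse = (rhoM c (c :: v₀.reverse)).dropLast := by
          rw [hv', rev_dropLast_rho, show (v₀ ++ [c]).reverse = c :: v₀.reverse from by simp]
        have h1 : v₀ ++ [c] ≠ c :: v₀.reverse := fun h => hvpal (by rw [hrv', hv', h])
        have h2 : c :: p.reverse ≠ x₃ := fun h => huw (by rw [hu'', hw', h])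
        have hxd : x = p ++ v₀ ++ x₃ := by rw [hxpq, hq, List.append_assoc]
        rw [hrv', hv', hw', hu'', wlt_dl hc (by simp) (by simp), wlt_dl hc hx₃ne (by simp)]
        exact shapeI_core hc hs hxd hx₃ne h1 h2
      · -- Shape II
        have hw' : w' = (rhoM c (c :: x₃)).dropLast := by
          rw [rho_cons, if_pos rfl, List.singleton_append, ← hw0, List.dropLast_concat]
        have hv' : v' = (rhoM c (v₀ ++ [e])).dropLast := by rw [dl_concat_e he, hv0]
        have hrv' : v'.reverse = (rhoM c (e :: v₀.reverse)).dropLast := by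
          rw [hv', rev_dropLast_rho, show (v₀ ++ [e]).reverse = e :: v₀.reverse from by simp]
        have h1 : v₀ ++ [e] ≠ e :: v₀.reverse := fun h => hvpal (by rw [hrv', hv', h])
        have h2 : p.reverse ≠ x₃ := fun h => huw (by rw [hu'', hw', h])
        have decomp : x = p.reverse.reverse ++ (v₀ ++ [e]) ++ x₃ := by
          rw [hxpq, hq]; simp [List.append_assoc]
        rw [hrv', hv', hw', hu'', wlt_dl hc (by simp) (by simp), wlt_dl hc (by simp) (by simp),
          wlt_cons_cons]
        have key := hs p.reverse (v₀ ++ [e]) x₃ decomp (by simp)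
          (by simpa using h1) h2
        rw [show (v₀ ++ [e]).reverse = e :: v₀.reverse from by simp] at key
        exact key
    · -- left cut misaligned
      have hu'' : u' = (rhoM c (e₀ :: p.reverse)).dropLast := by
        rw [← rev_rho_concat_e he₀, ← hup, List.reverse_reverse]
      cases v' with
      | nil => exact absurd rfl hvne
      | cons f v'' =>
        rw [List.cons_append] at hrest
        have hf : f = c := (List.cons_eq_cons.mp hrest).1
        subst f
        have hrest2 : v'' ++ (w' ++ [c]) = rhoM c q := (List.cons_eq_cons.mp hrest).2
        rcases split_rho q v'' (w' ++ [c]) hrest2 with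
          ⟨v₀, x₃, hq, hv0, hw0⟩ | ⟨v₀, e, x₃, he, hq, hv0, hw0⟩
        · -- Shape III
          have hx₃ne : x₃ ≠ [] := by
            intro h; rw [h, rho_nil] at hw0; simp at hw0
          have hw' : w' = (rhoM c x₃).dropLast := by rw [← hw0, List.dropLast_concat]
          have hv' : c :: v'' = (rhoM c (c :: (v₀ ++ [c]))).dropLast := by
            rw [dl_cons_c (by simp), dl_concat_c, hv0]
          have hrv' : (c :: v'').reverse
              = (rhoM c (c :: (v₀.reverse ++ [c]))).dropLast := by
            rw [hv', rev_dropLast_rho,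
              show (c :: (v₀ ++ [c])).reverse = c :: (v₀.reverse ++ [c]) from by simp]
          have h1 : v₀ ≠ v₀.reverse := fun h => hvpal (by rw [hrv', hv', ← h])
          have h0 : v₀ ≠ [] := fun h => h1 (by rw [h]; rfl)
          have h2 : e₀ :: p.reverse ≠ x₃ := fun h => huw (by rw [hu'', hw', h])
          have decomp : x = (e₀ :: p.reverse).reverse ++ v₀ ++ x₃ := by
            rw [hxpq, hq]; simp [List.append_assoc]
          rw [hrv', hv', hw', hu'', wlt_dl hc (by simp) (by simp),
            wlt_dl hc hx₃ne (by simp), wlt_cons_cons, wlt_concat hc]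
          exact hs (e₀ :: p.reverse) v₀ x₃ decomp h0 h1 h2
        · -- Shape IV
          apply iff_of_false
          · rw [hv0, show (c :: (rhoM c v₀ ++ [e])).reverse
                = e :: ((rhoM c v₀).reverse ++ [c]) from by simp]
            rintro (h | ⟨h, -⟩)
            · exact absurd h (not_lt.2 (hc e))
            · exact he h.symm
          · have hw' : w' = (rhoM c (c :: x₃)).dropLast := by
              rw [rho_cons, if_pos rfl, List.singleton_append, ← hw0, List.dropLast_concat]
            obtain ⟨l, hl⟩ := dl_cons_e he₀ p.reverse
            rw [hw', hu'', hl]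
            cases x₃ with
            | nil => rw [dl_c]; exact wlt_nil _
            | cons b x₃' =>
              rw [dl_cons_c (by simp)]
              rintro (h | ⟨h, -⟩)
              · exact absurd h (not_lt.2 (hc e₀))
              · exact he₀ h.symm
  · -- direction B
    intro hy u v w hxd hvne hvpal huw
    have hvc : v ≠ [c] := fun h => hvpal (by rw [h]; rfl)
    have hrevne : v.reverse ≠ [] := fun h => hvne (by simpa using h)
    have hyd : (rhoM c x).dropLast
        = ((rhoM c (c :: u)).dropLast).reverse ++ (rhoM c v).dropLast
          ++ (rhoM c (c :: w)).dropLast := by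
      rw [← rev_rho_rev, List.reverse_reverse, hxd, List.append_assoc,
        dl_append (by intro h; exact hvne (List.append_eq_nil_iff.mp h).1),
        dl_mid hvne, List.append_assoc]
    have key := hy ((rhoM c (c :: u)).dropLast) ((rhoM c v).dropLast)
      ((rhoM c (c :: w)).dropLast) hyd (dl_ne_nil hvne hvc)
      (by
        intro h
        rw [rev_dropLast_rho] at h
        exact hvpal (dl_inj hvne hrevne h))
      (by
        intro h
        have h2 := dl_inj (c := c) (by simp) (by simp) h
        exact huw (List.cons_eq_cons.mp h2).2)
    rw [rev_dropLast_rho, wlt_dl hc hvne hrevne,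
      wlt_dl hc (by simp) (by simp), wlt_cons_cons] at key
    exact key
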